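/- For integers n ≥ 2 and m ≥ 2, let P_n and P_m be paths with n and m vertices respectively. Then AT(P_n +_S P_m) = 2 if n = 2 and m = 2, and AT(P_n +_S P_m) = 3 otherwise. -/

import Mathlib

open scoped Classical

/-- The outdegree of a vertex `v` in a finite set of arcs `A`. -/
noncomputable def arcOutDeg {V : Type*} (A : Finset (V × V)) (v : V) : ℕ :=
  (A.filter fun a => a.1 = v).card

/-- The indegree of a vertex `v` in a finite set of arcs `A`. -/
noncomputable def arcInDeg {V : Type*} (A : Finset (V × V)) (v : V) : ℕ :=
  (A.filter fun a => a.2 = v).card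

/-- `A` is an orientation of the simple graph `G`: every arc of `A` joins adjacent
vertices, and every edge of `G` receives exactly one of its two possible directions. -/
def IsOrientation {V : Type*} (G : SimpleGraph V) (A : Finset (V × V)) : Prop :=
  (∀ a ∈ A, G.Adj a.1 a.2) ∧ ∀ u v : V, G.Adj u v → ((u, v) ∈ A ↔ (v, u) ∉ A)

/-- A set of arcs is Eulerian if at every vertex the indegree equals the outdegree. -/
def IsEulerianSub {V : Type*} (B : Finset (V × V)) : Prop :=
  ∀ v : V, arcInDeg B v = arcOutDeg B v

/-- An orientation (given by its arc set `A`) is an Alon–Tarsi orientation if the number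
of its even Eulerian sub-digraphs differs from the number of its odd Eulerian
sub-digraphs. -/
def IsATOrientation {V : Type*} (A : Finset (V × V)) : Prop :=
  (A.powerset.filter fun B => IsEulerianSub B ∧ Even B.card).card ≠
    (A.powerset.filter fun B => IsEulerianSub B ∧ ¬ Even B.card).card

/-- The Alon–Tarsi number of `G`: the least `k` such that `G` has an Alon–Tarsi
orientation with maximum outdegree at most `k - 1` (i.e. `< k`). -/
noncomputable def alonTarsiNumber {V : Type*} (G : SimpleGraph V) : ℕ :=
  sInf {k : ℕ | ∃ A : Finset (V × V),
    IsOrientation G A ∧ IsATOrientation A ∧ ∀ v : V, arcOutDeg A v < k}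

/-- A graph is `k`-degenerate if every nonempty (induced) subgraph has a vertex of
degree at most `k`. -/
def Degenerate {V : Type*} (k : ℕ) (G : SimpleGraph V) : Prop :=
  ∀ s : Finset V, s.Nonempty → ∃ v ∈ s, (s.filter fun u => G.Adj v u).card ≤ k

/-- The subdivision graph `S(G)`: each edge `uv` of `G` is replaced by a path `u-e-v`
through the new vertex `e` corresponding to `uv`. -/
def subdivisionGraph {V : Type*} (G : SimpleGraph V) : SimpleGraph (V ⊕ ↥G.edgeSet) :=
  SimpleGraph.fromRel fun a b =>
    match a, b with
    | Sum.inl u, Sum.inr e => u ∈ (e : Sym2 V)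
    | _, _ => False

/-- The graph `R(G)`: `G` together with, for each edge `uv`, a new vertex joined to
`u` and `v`. -/
def rGraph {V : Type*} (G : SimpleGraph V) : SimpleGraph (V ⊕ ↥G.edgeSet) :=
  SimpleGraph.fromRel fun a b =>
    match a, b with
    | Sum.inl u, Sum.inl v => G.Adj u v
    | Sum.inl u, Sum.inr e => u ∈ (e : Sym2 V)
    | _, _ => False

/-- The graph `Q(G)`: new vertices joined to the endpoints of their edges, and two new
vertices joined iff the corresponding edges of `G` share an endpoint; original
vertices are pairwise nonadjacent. -/
def qGraph {V : Type*} (G : SimpleGraph V) : SimpleGraph (V ⊕ ↥G.edgeSet) :=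
  SimpleGraph.fromRel fun a b =>
    match a, b with
    | Sum.inl u, Sum.inr e => u ∈ (e : Sym2 V)
    | Sum.inr e, Sum.inr f => e ≠ f ∧ ∃ u : V, u ∈ (e : Sym2 V) ∧ u ∈ (f : Sym2 V)
    | _, _ => False

/-- The total graph `T(G)`. -/
def tGraph {V : Type*} (G : SimpleGraph V) : SimpleGraph (V ⊕ ↥G.edgeSet) :=
  SimpleGraph.fromRel fun a b =>
    match a, b with
    | Sum.inl u, Sum.inl v => G.Adj u v
    | Sum.inl u, Sum.inr e => u ∈ (e : Sym2 V)
    | Sum.inr e, Sum.inr f => e ≠ f ∧ ∃ u : V, u ∈ (e : Sym2 V) ∧ u ∈ (f : Sym2 V)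
    | _, _ => False

/-- The `F`-sum construction: given a graph `K` on `V ⊕ E` (playing the role of `F(G)`,
whose "original" vertices are those of the form `Sum.inl u`) and a graph `H` on `W`,
two vertices `(u₁, u₂)` and `(v₁, v₂)` are adjacent iff either `u₁ = v₁` is an original
vertex and `u₂v₂ ∈ E(H)`, or `u₂ = v₂` and `u₁v₁ ∈ E(K)`. -/
def fSum {V E W : Type*} (K : SimpleGraph (V ⊕ E)) (H : SimpleGraph W) :
    SimpleGraph ((V ⊕ E) × W) :=
  SimpleGraph.fromRel fun a b =>
    (a.1 = b.1 ∧ (∃ u : V, a.1 = Sum.inl u) ∧ H.Adj a.2 b.2) ∨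
      (a.2 = b.2 ∧ K.Adj a.1 b.1)

/-- The `S`-sum `G +_S H`. -/
def sSum {V W : Type*} (G : SimpleGraph V) (H : SimpleGraph W) :
    SimpleGraph ((V ⊕ ↥G.edgeSet) × W) :=
  fSum (subdivisionGraph G) H

/-- The `R`-sum `G +_R H`. -/
def rSum {V W : Type*} (G : SimpleGraph V) (H : SimpleGraph W) :
    SimpleGraph ((V ⊕ ↥G.edgeSet) × W) :=
  fSum (rGraph G) H

/-- The `Q`-sum `G +_Q H`. -/
def qSum {V W : Type*} (G : SimpleGraph V) (H : SimpleGraph W) :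
    SimpleGraph ((V ⊕ ↥G.edgeSet) × W) :=
  fSum (qGraph G) H

/-- The `T`-sum `G +_T H`. -/
def tSum {V W : Type*} (G : SimpleGraph V) (H : SimpleGraph W) :
    SimpleGraph ((V ⊕ ↥G.edgeSet) × W) :=
  fSum (tGraph G) H

/-- The star graph `S_n = K_{1,n}`. -/
def starGraph (n : ℕ) : SimpleGraph (Fin 1 ⊕ Fin n) :=
  completeBipartiteGraph (Fin 1) (Fin n)

set_option linter.unusedSectionVars false
section General
variable {V : Type*} [Fintype V]

lemma eulerian_eq_empty (B : Finset (V × V)) (hB : IsEulerianSub B)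
    (φ : V → ℕ) (h : ∀ a ∈ B, φ a.2 = φ a.1 + 1) : B = ∅ := by
  have key : ∀ (f : V × V → V) (d : V → ℕ),
      (∀ v, d v = (B.filter fun a => f a = v).card) →
      ∑ a ∈ B, φ (f a) = ∑ v, d v * φ v := by
    intro f d hd
    rw [← Finset.sum_fiberwise B f (fun a => φ (f a))]
    refine Finset.sum_congr rfl fun v _ => ?_
    rw [hd v, Finset.sum_congr rfl (fun a ha => by
      rw [(Finset.mem_filter.mp ha).2]), Finset.sum_const, smul_eq_mul]
  have h1 : ∑ a ∈ B, φ a.2 = ∑ v, arcInDeg B v * φ v :=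
    key _ _ (fun v => rfl)
  have h2 : ∑ a ∈ B, φ a.1 = ∑ v, arcOutDeg B v * φ v :=
    key _ _ (fun v => rfl)
  have h3 : ∑ a ∈ B, φ a.2 = ∑ a ∈ B, φ a.1 := by
    rw [h1, h2]; exact Finset.sum_congr rfl fun v _ => by rw [hB v]
  have h4 : ∑ a ∈ B, φ a.2 = ∑ a ∈ B, φ a.1 + B.card := by
    rw [Finset.sum_congr rfl h, Finset.sum_add_distrib, Finset.sum_const,
      smul_eq_mul, mul_one]
  exact Finset.card_eq_zero.mp (by omega)

lemma empty_eulerian : IsEulerianSub (∅ : Finset (V × V)) := by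
  intro v; simp [arcInDeg, arcOutDeg]

lemma isAT_of_only_empty (A : Finset (V × V))
    (h : ∀ B ∈ A.powerset, IsEulerianSub B → B = ∅) : IsATOrientation A := by
  have he : (A.powerset.filter fun B => IsEulerianSub B ∧ Even B.card) = {∅} := by
    ext B
    simp only [Finset.mem_filter, Finset.mem_singleton]
    constructor
    · rintro ⟨hp, hE, -⟩; exact h B hp hE
    · rintro rfl
      exact ⟨Finset.empty_mem_powerset _, empty_eulerian, by simp⟩
  have ho : (A.powerset.filter fun B => IsEulerianSub B ∧ ¬ Even B.card) = ∅ := by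
    rw [Finset.filter_eq_empty_iff]
    rintro B hp ⟨hE, hodd⟩
    exact hodd (by rw [h B hp hE]; simp)
  rw [IsATOrientation, he, ho]
  simp

lemma isAT_of_empty_or_all (A : Finset (V × V)) (hcard : Even A.card) (hne : A ≠ ∅)
    (h : ∀ B ∈ A.powerset, IsEulerianSub B → B = ∅ ∨ B = A) (hEA : IsEulerianSub A) :
    IsATOrientation A := by
  have he : (A.powerset.filter fun B => IsEulerianSub B ∧ Even B.card) = {∅, A} := by
    ext B
    simp only [Finset.mem_filter, Finset.mem_insert, Finset.mem_singleton]
    constructor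
    · rintro ⟨hp, hE, -⟩; exact h B hp hE
    · rintro (rfl | rfl)
      · exact ⟨Finset.empty_mem_powerset _, empty_eulerian, by simp⟩
      · exact ⟨Finset.mem_powerset_self _, hEA, hcard⟩
  have ho : (A.powerset.filter fun B => IsEulerianSub B ∧ ¬ Even B.card) = ∅ := by
    rw [Finset.filter_eq_empty_iff]
    rintro B hp ⟨hE, hodd⟩
    rcases h B hp hE with rfl | rfl
    · exact hodd (by simp)
    · exact hodd hcard
  rw [IsATOrientation, he, ho]
  rw [Finset.card_insert_of_notMem (by simpa using Ne.symm hne)]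
  simp

end General
section General2
variable {V : Type*} [Fintype V]

/-- Orientation obtained from a grading: arcs go from `φ`-value `k` to `k+1`. -/
noncomputable def gradOrient (G : SimpleGraph V) (φ : V → ℕ) : Finset (V × V) :=
  Finset.univ.filter fun a => G.Adj a.1 a.2 ∧ φ a.1 + 1 = φ a.2

lemma mem_gradOrient {G : SimpleGraph V} {φ : V → ℕ} {a : V × V} :
    a ∈ gradOrient G φ ↔ G.Adj a.1 a.2 ∧ φ a.1 + 1 = φ a.2 := by
  simp [gradOrient]

lemma gradOrient_isOrientation (G : SimpleGraph V) (φ : V → ℕ)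
    (h : ∀ u v, G.Adj u v → φ u + 1 = φ v ∨ φ v + 1 = φ u) :
    IsOrientation G (gradOrient G φ) := by
  constructor
  · intro a ha; exact (mem_gradOrient.mp ha).1
  · intro u v huv
    rcases h u v huv with h1 | h1
    · constructor
      · intro _ hc
        have := (mem_gradOrient.mp hc).2; simp at this; omega
      · intro _; exact mem_gradOrient.mpr ⟨huv, h1⟩
    · constructor
      · intro hc _
        have := (mem_gradOrient.mp hc).2; simp at this; omega
      · intro hc
        exact absurd (mem_gradOrient.mpr ⟨huv.symm, h1⟩) hc

lemma gradOrient_isAT (G : SimpleGraph V) (φ : V → ℕ) :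
    IsATOrientation (gradOrient G φ) := by
  apply isAT_of_only_empty
  intro B hB hE
  refine eulerian_eq_empty B hE φ fun a ha => ?_
  have := mem_gradOrient.mp (Finset.mem_powerset.mp hB ha)
  omega

lemma arcOutDeg_gradOrient_le_two (G : SimpleGraph V) (φ : V → ℕ) (v : V)
    (f : V → Bool)
    (huniq : ∀ w w', G.Adj v w → G.Adj v w' → φ v + 1 = φ w → φ v + 1 = φ w' →
      f w = f w' → w = w') :
    arcOutDeg (gradOrient G φ) v ≤ 2 := by
  rw [arcOutDeg]
  have : ((gradOrient G φ).filter fun a => a.1 = v).card ≤ (Finset.univ : Finset Bool).card := by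
    apply Finset.card_le_card_of_injOn (fun a => f a.2) (fun _ _ => Finset.mem_univ _)
    intro a ha b hb hab
    simp only [Finset.coe_filter, Set.mem_setOf_eq] at ha hb
    obtain ⟨ha1, ha2⟩ := ha
    obtain ⟨hb1, hb2⟩ := hb
    rw [mem_gradOrient] at ha1 hb1
    have := huniq a.2 b.2 (ha2 ▸ ha1.1) (hb2 ▸ hb1.1) (by rw [← ha2]; exact ha1.2)
      (by rw [← hb2]; exact hb1.2) hab
    exact Prod.ext (ha2.trans hb2.symm) this
  simpa using this

lemma no_orientation_outdeg_zero (G : SimpleGraph V) (A : Finset (V × V))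
    (hA : IsOrientation G A) (hd : ∀ v, arcOutDeg A v = 0) {u v : V}
    (huv : G.Adj u v) : False := by
  have key : ∀ a : V × V, a ∈ A → False := by
    intro a ha
    have : a ∈ A.filter fun b => b.1 = a.1 := Finset.mem_filter.mpr ⟨ha, rfl⟩
    have h2 := hd a.1
    rw [arcOutDeg, Finset.card_eq_zero] at h2
    rw [h2] at this
    exact absurd this (Finset.notMem_empty _)
  by_cases h : (u, v) ∈ A
  · exact key _ h
  · exact key (v, u) (by_contra fun hc => h ((hA.2 u v huv).mpr hc))

lemma no_orientation_outdeg_le_one (G : SimpleGraph V) (A : Finset (V × V))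
    (hA : IsOrientation G A) (hd : ∀ v, arcOutDeg A v ≤ 1)
    (S : Finset V) (T : Finset (V × V))
    (hT : ∀ p ∈ T, G.Adj p.1 p.2 ∧ p.1 ∈ S ∧ p.2 ∈ S)
    (hT2 : ∀ p ∈ T, (p.2, p.1) ∉ T)
    (hST : S.card < T.card) : False := by
  classical
  set A' := A.filter (fun a => a.1 ∈ S ∧ a.2 ∈ S) with hA'def
  have hcard : A'.card ≤ S.card := by
    rw [Finset.card_eq_sum_card_fiberwise (f := fun a => a.1) (t := S)
      (fun a ha => (Finset.mem_filter.mp ha).2.1)]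
    calc ∑ v ∈ S, (A'.filter fun a => a.1 = v).card
        ≤ ∑ _v ∈ S, 1 := Finset.sum_le_sum (fun v _ => by
          refine le_trans (le_trans (Finset.card_le_card ?_) (le_of_eq rfl)) (hd v)
          intro a ha
          simp only [Finset.mem_filter] at ha ⊢
          exact ⟨(Finset.mem_filter.mp ha.1).1, ha.2⟩)
      _ = S.card := by simp
  have hinj : T.card ≤ A'.card := by
    apply Finset.card_le_card_of_injOn (fun p => if p ∈ A then p else (p.2, p.1))
    · intro p hp
      obtain ⟨hadj, h1, h2⟩ := hT p hp
      by_cases hpA : p ∈ A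
      · simp only [if_pos hpA]
        exact Finset.mem_filter.mpr ⟨hpA, h1, h2⟩
      · have hrev : (p.2, p.1) ∈ A := by
          by_contra hc
          have := (hA.2 p.1 p.2 hadj).mpr hc
          rw [Prod.mk.eta] at this
          exact hpA this
        simp only [if_neg hpA]
        exact Finset.mem_filter.mpr ⟨hrev, h2, h1⟩
    · intro p hp q hq heq
      simp only [Finset.mem_coe] at hp hq
      by_cases hpA : p ∈ A <;> by_cases hqA : q ∈ A <;>
        simp only [if_pos, if_neg, hpA, hqA, if_true, if_false] at heq
      · exact heq
      · exfalso
        have hq2 : q = (p.2, p.1) := by simp [heq]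
        exact hT2 p hp (hq2 ▸ hq)
      · exfalso
        have hp2 : p = (q.2, q.1) := by simp [← heq]
        exact hT2 q hq (hp2 ▸ hp)
      · exact Prod.ext (congrArg Prod.snd heq) (congrArg Prod.fst heq)
  omega

end General2
section PathStruct
open SimpleGraph

/-- x-coordinate on the vertices of the subdivision of a path. -/
noncomputable def xc {n : ℕ} : (Fin n ⊕ ↥(pathGraph n).edgeSet) → ℕ
  | Sum.inl u => 2 * u.val
  | Sum.inr e => 2 * (Sym2.inf e.val).val + 1

lemma path_edge_rep {n : ℕ} (E : Sym2 (Fin n)) (hE : E ∈ (pathGraph n).edgeSet) :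
    ∃ i j : Fin n, (i : ℕ) + 1 = (j : ℕ) ∧ E = s(i, j) := by
  induction E using Sym2.inductionOn with
  | hf a b =>
    rw [SimpleGraph.mem_edgeSet, pathGraph_adj] at hE
    rcases hE with h | h
    · exact ⟨a, b, h, rfl⟩
    · exact ⟨b, a, h, Sym2.eq_swap⟩

lemma xc_inr {n : ℕ} (e : ↥(pathGraph n).edgeSet) {i j : Fin n}
    (hij : (i : ℕ) + 1 = (j : ℕ)) (he : e.val = s(i, j)) :
    xc (Sum.inr e) = 2 * (i : ℕ) + 1 := by
  have : Sym2.inf e.val = i := by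
    rw [he, Sym2.inf_mk, inf_eq_left]
    exact le_of_lt (by rw [Fin.lt_def]; omega)
  simp [xc, this]

lemma subdiv_adj_cases {n : ℕ} {a b : Fin n ⊕ ↥(pathGraph n).edgeSet}
    (h : (subdivisionGraph (pathGraph n)).Adj a b) :
    (∃ u e, (a = Sum.inl u ∧ b = Sum.inr e ∨ a = Sum.inr e ∧ b = Sum.inl u) ∧
      u ∈ e.val) := by
  rw [subdivisionGraph, SimpleGraph.fromRel_adj] at h
  obtain ⟨-, h | h⟩ := h
  · match a, b, h with
    | Sum.inl u, Sum.inr e, h => exact ⟨u, e, Or.inl ⟨rfl, rfl⟩, h⟩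
  · match a, b, h with
    | Sum.inr e, Sum.inl u, h => exact ⟨u, e, Or.inr ⟨rfl, rfl⟩, h⟩

lemma subdiv_adj_of_mem {n : ℕ} {u : Fin n} {e : ↥(pathGraph n).edgeSet}
    (h : u ∈ e.val) : (subdivisionGraph (pathGraph n)).Adj (Sum.inl u) (Sum.inr e) := by
  rw [subdivisionGraph, SimpleGraph.fromRel_adj]
  exact ⟨by simp, Or.inl h⟩

lemma subdiv_xc_step {n : ℕ} {a b : Fin n ⊕ ↥(pathGraph n).edgeSet}
    (h : (subdivisionGraph (pathGraph n)).Adj a b) :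
    xc a + 1 = xc b ∨ xc b + 1 = xc a := by
  obtain ⟨u, e, hcase, hmem⟩ := subdiv_adj_cases h
  obtain ⟨i, j, hij, hrep⟩ := path_edge_rep e.val e.2
  have hx : xc (Sum.inr e) = 2 * (i : ℕ) + 1 := xc_inr e hij hrep
  have hu : u = i ∨ u = j := by
    rw [hrep] at hmem; exact Sym2.mem_iff.mp hmem
  have hxu : xc (Sum.inl u) = 2 * (u : ℕ) := rfl
  rcases hcase with ⟨rfl, rfl⟩ | ⟨rfl, rfl⟩ <;> rcases hu with rfl | rfl <;>
    rw [hx, hxu] <;> omega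

lemma subdiv_unique {n : ℕ} {a b c : Fin n ⊕ ↥(pathGraph n).edgeSet}
    (hab : (subdivisionGraph (pathGraph n)).Adj a b)
    (hac : (subdivisionGraph (pathGraph n)).Adj a c) (hx : xc b = xc c) : b = c := by
  obtain ⟨u, e, hcase, hmem⟩ := subdiv_adj_cases hab
  obtain ⟨u', e', hcase', hmem'⟩ := subdiv_adj_cases hac
  obtain ⟨i, j, hij, hrep⟩ := path_edge_rep e.val e.2
  obtain ⟨i', j', hij', hrep'⟩ := path_edge_rep e'.val e'.2
  have hx1 : xc (Sum.inr e) = 2 * (i : ℕ) + 1 := xc_inr e hij hrep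
  have hx2 : xc (Sum.inr e') = 2 * (i' : ℕ) + 1 := xc_inr e' hij' hrep'
  rcases hcase with ⟨ha, rfl⟩ | ⟨ha, rfl⟩ <;> rcases hcase' with ⟨ha', rfl⟩ | ⟨ha', rfl⟩
  · -- b = inr e, c = inr e': a = inl u = inl u'
    rw [hx1, hx2] at hx
    have hii : i = i' := Fin.val_injective (a₁ := i) (a₂ := i') (by omega)
    have hjj : j = j' := Fin.val_injective (by omega)
    exact congrArg Sum.inr (Subtype.ext (by rw [hrep, hrep', hii, hjj]))
  · exact absurd (ha.symm.trans ha') (by simp)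
  · exact absurd (ha.symm.trans ha') (by simp)
  · -- b = inl u, c = inl u'
    have : (u : ℕ) = (u' : ℕ) := by
      have h1 : xc (Sum.inl u) = 2 * (u : ℕ) := rfl
      have h2 : xc (Sum.inl u') = 2 * (u' : ℕ) := rfl
      omega
    exact congrArg Sum.inl (Fin.val_injective this)

end PathStruct
section SSumStruct
open SimpleGraph

variable {n m : ℕ}

/-- Grading on the vertices of `P_n +_S P_m`. -/
noncomputable def pp {n m : ℕ} (v : (Fin n ⊕ ↥(pathGraph n).edgeSet) × Fin m) : ℕ :=
  xc v.1 + (v.2 : ℕ)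

lemma sSum_adj_cases {a b : (Fin n ⊕ ↥(pathGraph n).edgeSet) × Fin m}
    (h : (sSum (pathGraph n) (pathGraph m)).Adj a b) :
    (a.1 = b.1 ∧ (∃ u : Fin n, a.1 = Sum.inl u) ∧ (pathGraph m).Adj a.2 b.2) ∨
      (a.2 = b.2 ∧ (subdivisionGraph (pathGraph n)).Adj a.1 b.1) := by
  rw [sSum, fSum, SimpleGraph.fromRel_adj] at h
  obtain ⟨hne, h | h⟩ := h
  · rcases h with ⟨h1, hu, h3⟩ | ⟨h1, h2⟩
    · exact Or.inl ⟨h1, hu, h3⟩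
    · exact Or.inr ⟨h1, h2⟩
  · rcases h with ⟨h1, hu, h3⟩ | ⟨h1, h2⟩
    · exact Or.inl ⟨h1.symm, h1 ▸ hu, h3.symm⟩
    · exact Or.inr ⟨h1.symm, h2.symm⟩

lemma sSum_adj_of_vert {x : Fin n ⊕ ↥(pathGraph n).edgeSet} {r r' : Fin m}
    (hx : ∃ u : Fin n, x = Sum.inl u) (h : (pathGraph m).Adj r r') :
    (sSum (pathGraph n) (pathGraph m)).Adj (x, r) (x, r') := by
  rw [sSum, fSum, SimpleGraph.fromRel_adj]
  exact ⟨by simp [h.ne], Or.inl (Or.inl ⟨rfl, hx, h⟩)⟩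

lemma sSum_adj_of_horiz {c c' : Fin n ⊕ ↥(pathGraph n).edgeSet} {r : Fin m}
    (h : (subdivisionGraph (pathGraph n)).Adj c c') :
    (sSum (pathGraph n) (pathGraph m)).Adj (c, r) (c', r) := by
  rw [sSum, fSum, SimpleGraph.fromRel_adj]
  exact ⟨by simp [Prod.ext_iff, h.ne], Or.inl (Or.inr ⟨rfl, h⟩)⟩

lemma pp_step {a b : (Fin n ⊕ ↥(pathGraph n).edgeSet) × Fin m}
    (h : (sSum (pathGraph n) (pathGraph m)).Adj a b) :
    pp a + 1 = pp b ∨ pp b + 1 = pp a := by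
  rcases sSum_adj_cases h with ⟨h1, -, h2⟩ | ⟨h1, h2⟩
  · rw [pathGraph_adj] at h2
    unfold pp; rw [h1]; omega
  · have := subdiv_xc_step h2
    unfold pp; rw [h1]; omega

lemma pp_uniq {v w w' : (Fin n ⊕ ↥(pathGraph n).edgeSet) × Fin m}
    (hw : (sSum (pathGraph n) (pathGraph m)).Adj v w)
    (hw' : (sSum (pathGraph n) (pathGraph m)).Adj v w')
    (h1 : pp v + 1 = pp w) (h2 : pp v + 1 = pp w')
    (hiff : w.1 = v.1 ↔ w'.1 = v.1) : w = w' := by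
  by_cases hc : w.1 = v.1
  · have hc' : w'.1 = v.1 := hiff.mp hc
    have hv : (pathGraph m).Adj v.2 w.2 := by
      rcases sSum_adj_cases hw with ⟨-, -, h⟩ | ⟨-, hK⟩
      · exact h
      · exact absurd hc.symm hK.ne
    have hv' : (pathGraph m).Adj v.2 w'.2 := by
      rcases sSum_adj_cases hw' with ⟨-, -, h⟩ | ⟨-, hK⟩
      · exact h
      · exact absurd hc'.symm hK.ne
    have e1 : (w.2 : ℕ) = (v.2 : ℕ) + 1 := by
      unfold pp at h1; rw [hc] at h1; omega
    have e2 : (w'.2 : ℕ) = (v.2 : ℕ) + 1 := by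
      unfold pp at h2; rw [hc'] at h2; omega
    exact Prod.ext (hc.trans hc'.symm) (Fin.val_injective (by omega))
  · have hc' : ¬ w'.1 = v.1 := fun h => hc (hiff.mpr h)
    have hh : w.2 = v.2 ∧ (subdivisionGraph (pathGraph n)).Adj v.1 w.1 := by
      rcases sSum_adj_cases hw with ⟨h, -, -⟩ | ⟨h, hK⟩
      · exact absurd h.symm hc
      · exact ⟨h.symm, hK⟩
    have hh' : w'.2 = v.2 ∧ (subdivisionGraph (pathGraph n)).Adj v.1 w'.1 := by
      rcases sSum_adj_cases hw' with ⟨h, -, -⟩ | ⟨h, hK⟩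
      · exact absurd h.symm hc'
      · exact ⟨h.symm, hK⟩
    have e1 : xc w.1 = xc v.1 + 1 := by
      unfold pp at h1; rw [hh.1] at h1; omega
    have e2 : xc w'.1 = xc v.1 + 1 := by
      unfold pp at h2; rw [hh'.1] at h2; omega
    exact Prod.ext (subdiv_unique hh.2 hh'.2 (e1.trans e2.symm)) (hh.1.trans hh'.1.symm)

end SSumStruct
section Lower
open SimpleGraph

lemma no_orient_card {V : Type*} [Fintype V] (G : SimpleGraph V) (A : Finset (V × V))
    (hA : IsOrientation G A) (hd : ∀ v, arcOutDeg A v ≤ 1)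
    {a b : ℕ} (hab : a < b) (s : Fin a → V) (t : Fin b → V × V) (ψ : V → ℕ)
    (ht1 : ∀ k, G.Adj (t k).1 (t k).2)
    (hts : ∀ k, (∃ j, (t k).1 = s j) ∧ (∃ j, (t k).2 = s j))
    (htψ : ∀ k, ψ (t k).1 < ψ (t k).2)
    (htinj : Function.Injective t) : False := by
  apply no_orientation_outdeg_le_one G A hA hd (Finset.univ.image s) (Finset.univ.image t)
  · intro p hp
    obtain ⟨k, -, rfl⟩ := Finset.mem_image.mp hp
    obtain ⟨⟨j1, hj1⟩, ⟨j2, hj2⟩⟩ := hts k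
    exact ⟨ht1 k, hj1 ▸ Finset.mem_image_of_mem _ (Finset.mem_univ _),
      hj2 ▸ Finset.mem_image_of_mem _ (Finset.mem_univ _)⟩
  · intro p hp hsw
    obtain ⟨k, -, rfl⟩ := Finset.mem_image.mp hp
    obtain ⟨l, -, hl⟩ := Finset.mem_image.mp hsw
    have h1 := htψ k
    have h2 := htψ l
    rw [hl] at h2
    simp only at h2
    omega
  · calc (Finset.univ.image s).card ≤ (Finset.univ : Finset (Fin a)).card :=
          Finset.card_image_le
      _ = a := by simp
      _ < b := hab
      _ = (Finset.univ : Finset (Fin b)).card := by simp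
      _ = (Finset.univ.image t).card :=
          (Finset.card_image_of_injective _ htinj).symm

noncomputable instance {n : ℕ} : Fintype ↥(SimpleGraph.pathGraph n).edgeSet :=
  Fintype.ofFinite _

lemma exists_AT3 (n m : ℕ) :
    ∃ A, IsOrientation (sSum (pathGraph n) (pathGraph m)) A ∧ IsATOrientation A ∧
      ∀ v, arcOutDeg A v < 3 := by
  refine ⟨gradOrient _ pp, gradOrient_isOrientation _ pp (fun u v h => pp_step h),
    gradOrient_isAT _ pp, fun v => ?_⟩
  have h2 := arcOutDeg_gradOrient_le_two (sSum (pathGraph n) (pathGraph m)) pp v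
      (fun w => if w.1 = v.1 then true else false) ?_
  · omega
  · intro w w' hw hw' h1 h2 hf
    refine pp_uniq hw hw' h1 h2 ?_
    by_cases hcw : w.1 = v.1 <;> by_cases hcw' : w'.1 = v.1 <;> simp_all

lemma lower_n3 {n m : ℕ} (hn : 3 ≤ n) (hm : 2 ≤ m)
    (A : Finset (((Fin n ⊕ ↥(pathGraph n).edgeSet) × Fin m) ×
      ((Fin n ⊕ ↥(pathGraph n).edgeSet) × Fin m)))
    (hA : IsOrientation (sSum (pathGraph n) (pathGraph m)) A)
    (hd : ∀ v, arcOutDeg A v ≤ 1) : False := by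
  obtain ⟨i0, hi0⟩ : ∃ i : Fin n, (i : ℕ) = 0 := ⟨⟨0, by omega⟩, rfl⟩
  obtain ⟨i1, hi1⟩ : ∃ i : Fin n, (i : ℕ) = 1 := ⟨⟨1, by omega⟩, rfl⟩
  obtain ⟨i2, hi2⟩ : ∃ i : Fin n, (i : ℕ) = 2 := ⟨⟨2, by omega⟩, rfl⟩
  obtain ⟨r0, hr0⟩ : ∃ r : Fin m, (r : ℕ) = 0 := ⟨⟨0, by omega⟩, rfl⟩
  obtain ⟨r1, hr1⟩ : ∃ r : Fin m, (r : ℕ) = 1 := ⟨⟨1, by omega⟩, rfl⟩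
  have hadj01 : (pathGraph n).Adj i0 i1 := pathGraph_adj.mpr (Or.inl (by omega))
  have hadj12 : (pathGraph n).Adj i1 i2 := pathGraph_adj.mpr (Or.inl (by omega))
  have hradj : (pathGraph m).Adj r0 r1 := pathGraph_adj.mpr (Or.inl (by omega))
  obtain ⟨E0, hE0⟩ : ∃ E : ↥(pathGraph n).edgeSet, E.val = s(i0, i1) :=
    ⟨⟨s(i0, i1), (SimpleGraph.mem_edgeSet _).mpr hadj01⟩, rfl⟩
  obtain ⟨E1, hE1⟩ : ∃ E : ↥(pathGraph n).edgeSet, E.val = s(i1, i2) :=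
    ⟨⟨s(i1, i2), (SimpleGraph.mem_edgeSet _).mpr hadj12⟩, rfl⟩
  set c0 : Fin n ⊕ ↥(pathGraph n).edgeSet := Sum.inl i0 with hc0
  set c1 : Fin n ⊕ ↥(pathGraph n).edgeSet := Sum.inr E0 with hc1
  set c2 : Fin n ⊕ ↥(pathGraph n).edgeSet := Sum.inl i1 with hc2
  set c3 : Fin n ⊕ ↥(pathGraph n).edgeSet := Sum.inr E1 with hc3
  set c4 : Fin n ⊕ ↥(pathGraph n).edgeSet := Sum.inl i2 with hc4
  have hx0 : xc c0 = 0 := by simp [hc0, xc, hi0]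
  have hx2 : xc c2 = 2 := by simp [hc2, xc, hi1]
  have hx4 : xc c4 = 4 := by simp [hc4, xc, hi2]
  have hx1 : xc c1 = 1 := by
    rw [hc1, xc_inr E0 (i := i0) (j := i1) (by omega) hE0]; omega
  have hx3 : xc c3 = 3 := by
    rw [hc3, xc_inr E1 (i := i1) (j := i2) (by omega) hE1]; omega
  have hm0 : i0 ∈ E0.val := by rw [hE0]; exact Sym2.mem_mk_left i0 i1
  have hm1 : i1 ∈ E0.val := by rw [hE0]; exact Sym2.mem_mk_right i0 i1
  have hm1' : i1 ∈ E1.val := by rw [hE1]; exact Sym2.mem_mk_left i1 i2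
  have hm2 : i2 ∈ E1.val := by rw [hE1]; exact Sym2.mem_mk_right i1 i2
  have a01 : (subdivisionGraph (pathGraph n)).Adj c0 c1 := subdiv_adj_of_mem hm0
  have a12 : (subdivisionGraph (pathGraph n)).Adj c1 c2 := (subdiv_adj_of_mem hm1).symm
  have a23 : (subdivisionGraph (pathGraph n)).Adj c2 c3 := subdiv_adj_of_mem hm1'
  have a34 : (subdivisionGraph (pathGraph n)).Adj c3 c4 := (subdiv_adj_of_mem hm2).symm
  set s : Fin 10 → (Fin n ⊕ ↥(pathGraph n).edgeSet) × Fin m :=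
    ![(c0, r0), (c1, r0), (c2, r0), (c3, r0), (c4, r0),
      (c0, r1), (c1, r1), (c2, r1), (c3, r1), (c4, r1)] with hs
  set t : Fin 11 → ((Fin n ⊕ ↥(pathGraph n).edgeSet) × Fin m) ×
      ((Fin n ⊕ ↥(pathGraph n).edgeSet) × Fin m) :=
    ![((c0, r0), (c1, r0)), ((c1, r0), (c2, r0)), ((c2, r0), (c3, r0)), ((c3, r0), (c4, r0)),
      ((c0, r1), (c1, r1)), ((c1, r1), (c2, r1)), ((c2, r1), (c3, r1)), ((c3, r1), (c4, r1)),
      ((c0, r0), (c0, r1)), ((c2, r0), (c2, r1)), ((c4, r0), (c4, r1))] with ht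
  have hgt : ∀ k : Fin 11, pp (t k).1 + 10 * pp (t k).2 + 100 * ((t k).1.2 : ℕ) +
      1000 * ((t k).2.2 : ℕ) =
      (![10, 21, 32, 43, 1121, 1132, 1143, 1154, 1010, 1032, 1054] : Fin 11 → ℕ) k := by
    simp only [ht, Fin.forall_fin_succ, Matrix.cons_val_zero,
      Matrix.cons_val_succ, and_true]
    simp only [pp, hx0, hx1, hx2, hx3, hx4, hr0, hr1]
    norm_num
  have hstep : ∀ k : Fin 11, pp (t k).1 + 1 = pp (t k).2 := by
    simp only [ht, Fin.forall_fin_succ, Matrix.cons_val_zero,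
      Matrix.cons_val_succ, and_true]
    simp only [pp, hx0, hx1, hx2, hx3, hx4, hr0, hr1]
    norm_num
  have hfinj : Function.Injective
      (![10, 21, 32, 43, 1121, 1132, 1143, 1154, 1010, 1032, 1054] : Fin 11 → ℕ) := by
    decide
  refine no_orient_card _ A hA hd (by omega : 10 < 11) s t pp ?_ ?_ ?_ ?_
  · simp only [ht, Fin.forall_fin_succ, Matrix.cons_val_zero,
      Matrix.cons_val_succ, and_true]
    exact ⟨sSum_adj_of_horiz a01, sSum_adj_of_horiz a12, sSum_adj_of_horiz a23,
      sSum_adj_of_horiz a34, sSum_adj_of_horiz a01, sSum_adj_of_horiz a12,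
      sSum_adj_of_horiz a23, sSum_adj_of_horiz a34,
      sSum_adj_of_vert ⟨i0, hc0⟩ hradj, sSum_adj_of_vert ⟨i1, hc2⟩ hradj,
      sSum_adj_of_vert ⟨i2, hc4⟩ hradj, fun i => i.elim0⟩
  · simp only [ht, hs, Fin.forall_fin_succ, Matrix.cons_val_zero,
      Matrix.cons_val_succ, and_true]
    refine ⟨⟨⟨0, rfl⟩, ⟨1, rfl⟩⟩, ⟨⟨1, rfl⟩, ⟨2, rfl⟩⟩, ⟨⟨2, rfl⟩, ⟨3, rfl⟩⟩, ⟨⟨3, rfl⟩, ⟨4, rfl⟩⟩,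
      ⟨⟨5, rfl⟩, ⟨6, rfl⟩⟩, ⟨⟨6, rfl⟩, ⟨7, rfl⟩⟩, ⟨⟨7, rfl⟩, ⟨8, rfl⟩⟩, ⟨⟨8, rfl⟩, ⟨9, rfl⟩⟩,
      ⟨⟨0, rfl⟩, ⟨5, rfl⟩⟩, ⟨⟨2, rfl⟩, ⟨7, rfl⟩⟩, ⟨⟨4, rfl⟩, ⟨9, rfl⟩⟩, fun i => i.elim0⟩
  · intro k
    have h2 := hstep k
    omega
  · intro k l hkl
    apply hfinj
    rw [← hgt k, ← hgt l, hkl]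

end Lower
section LowerM
open SimpleGraph

lemma lower_m3 {n m : ℕ} (hn : 2 ≤ n) (hm : 3 ≤ m)
    (A : Finset (((Fin n ⊕ ↥(pathGraph n).edgeSet) × Fin m) ×
      ((Fin n ⊕ ↥(pathGraph n).edgeSet) × Fin m)))
    (hA : IsOrientation (sSum (pathGraph n) (pathGraph m)) A)
    (hd : ∀ v, arcOutDeg A v ≤ 1) : False := by
  obtain ⟨i0, hi0⟩ : ∃ i : Fin n, (i : ℕ) = 0 := ⟨⟨0, by omega⟩, rfl⟩
  obtain ⟨i1, hi1⟩ : ∃ i : Fin n, (i : ℕ) = 1 := ⟨⟨1, by omega⟩, rfl⟩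
  obtain ⟨r0, hr0⟩ : ∃ r : Fin m, (r : ℕ) = 0 := ⟨⟨0, by omega⟩, rfl⟩
  obtain ⟨r1, hr1⟩ : ∃ r : Fin m, (r : ℕ) = 1 := ⟨⟨1, by omega⟩, rfl⟩
  obtain ⟨r2, hr2⟩ : ∃ r : Fin m, (r : ℕ) = 2 := ⟨⟨2, by omega⟩, rfl⟩
  have hadj01 : (pathGraph n).Adj i0 i1 := pathGraph_adj.mpr (Or.inl (by omega))
  have hradj01 : (pathGraph m).Adj r0 r1 := pathGraph_adj.mpr (Or.inl (by omega))
  have hradj12 : (pathGraph m).Adj r1 r2 := pathGraph_adj.mpr (Or.inl (by omega))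
  obtain ⟨E0, hE0⟩ : ∃ E : ↥(pathGraph n).edgeSet, E.val = s(i0, i1) :=
    ⟨⟨s(i0, i1), (SimpleGraph.mem_edgeSet _).mpr hadj01⟩, rfl⟩
  set c0 : Fin n ⊕ ↥(pathGraph n).edgeSet := Sum.inl i0 with hc0
  set c1 : Fin n ⊕ ↥(pathGraph n).edgeSet := Sum.inr E0 with hc1
  set c2 : Fin n ⊕ ↥(pathGraph n).edgeSet := Sum.inl i1 with hc2
  have hx0 : xc c0 = 0 := by simp [hc0, xc, hi0]
  have hx2 : xc c2 = 2 := by simp [hc2, xc, hi1]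
  have hx1 : xc c1 = 1 := by
    rw [hc1, xc_inr E0 (i := i0) (j := i1) (by omega) hE0]; omega
  have hm0 : i0 ∈ E0.val := by rw [hE0]; exact Sym2.mem_mk_left i0 i1
  have hm1 : i1 ∈ E0.val := by rw [hE0]; exact Sym2.mem_mk_right i0 i1
  have a01 : (subdivisionGraph (pathGraph n)).Adj c0 c1 := subdiv_adj_of_mem hm0
  have a12 : (subdivisionGraph (pathGraph n)).Adj c1 c2 := (subdiv_adj_of_mem hm1).symm
  set s : Fin 9 → (Fin n ⊕ ↥(pathGraph n).edgeSet) × Fin m :=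
    ![(c0, r0), (c1, r0), (c2, r0), (c0, r1), (c1, r1), (c2, r1),
      (c0, r2), (c1, r2), (c2, r2)] with hs
  set t : Fin 10 → ((Fin n ⊕ ↥(pathGraph n).edgeSet) × Fin m) ×
      ((Fin n ⊕ ↥(pathGraph n).edgeSet) × Fin m) :=
    ![((c0, r0), (c1, r0)), ((c1, r0), (c2, r0)), ((c0, r1), (c1, r1)), ((c1, r1), (c2, r1)),
      ((c0, r2), (c1, r2)), ((c1, r2), (c2, r2)), ((c0, r0), (c0, r1)), ((c0, r1), (c0, r2)),
      ((c2, r0), (c2, r1)), ((c2, r1), (c2, r2))] with ht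
  have hgt : ∀ k : Fin 10, pp (t k).1 + 10 * pp (t k).2 + 100 * ((t k).1.2 : ℕ) +
      1000 * ((t k).2.2 : ℕ) =
      (![10, 21, 1121, 1132, 2232, 2243, 1010, 2121, 1032, 2143] : Fin 10 → ℕ) k := by
    simp only [ht, Fin.forall_fin_succ, Matrix.cons_val_zero,
      Matrix.cons_val_succ, and_true]
    simp only [pp, hx0, hx1, hx2, hr0, hr1, hr2]
    norm_num
  have hstep : ∀ k : Fin 10, pp (t k).1 + 1 = pp (t k).2 := by
    simp only [ht, Fin.forall_fin_succ, Matrix.cons_val_zero,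
      Matrix.cons_val_succ, and_true]
    simp only [pp, hx0, hx1, hx2, hr0, hr1, hr2]
    norm_num
  have hfinj : Function.Injective
      (![10, 21, 1121, 1132, 2232, 2243, 1010, 2121, 1032, 2143] : Fin 10 → ℕ) := by
    decide
  refine no_orient_card _ A hA hd (by omega : 9 < 10) s t pp ?_ ?_ ?_ ?_
  · simp only [ht, Fin.forall_fin_succ, Matrix.cons_val_zero,
      Matrix.cons_val_succ, and_true]
    exact ⟨sSum_adj_of_horiz a01, sSum_adj_of_horiz a12, sSum_adj_of_horiz a01,
      sSum_adj_of_horiz a12, sSum_adj_of_horiz a01, sSum_adj_of_horiz a12,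
      sSum_adj_of_vert ⟨i0, hc0⟩ hradj01, sSum_adj_of_vert ⟨i0, hc0⟩ hradj12,
      sSum_adj_of_vert ⟨i1, hc2⟩ hradj01, sSum_adj_of_vert ⟨i1, hc2⟩ hradj12,
      fun i => i.elim0⟩
  · simp only [ht, hs, Fin.forall_fin_succ, Matrix.cons_val_zero,
      Matrix.cons_val_succ, and_true]
    refine ⟨⟨⟨0, rfl⟩, ⟨1, rfl⟩⟩, ⟨⟨1, rfl⟩, ⟨2, rfl⟩⟩, ⟨⟨3, rfl⟩, ⟨4, rfl⟩⟩, ⟨⟨4, rfl⟩, ⟨5, rfl⟩⟩,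
      ⟨⟨6, rfl⟩, ⟨7, rfl⟩⟩, ⟨⟨7, rfl⟩, ⟨8, rfl⟩⟩, ⟨⟨0, rfl⟩, ⟨3, rfl⟩⟩, ⟨⟨3, rfl⟩, ⟨6, rfl⟩⟩,
      ⟨⟨2, rfl⟩, ⟨5, rfl⟩⟩, ⟨⟨5, rfl⟩, ⟨8, rfl⟩⟩, fun i => i.elim0⟩
  · intro k
    have h2 := hstep k
    omega
  · intro k l hkl
    apply hfinj
    rw [← hgt k, ← hgt l, hkl]

end LowerM
section Case22
open SimpleGraph

lemma euler_chase {V : Type*} (B : Finset (V × V)) (hE : IsEulerianSub B) {x v : V}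
    (h : (x, v) ∈ B) : ∃ w, (v, w) ∈ B := by
  have h1 : 0 < arcInDeg B v :=
    Finset.card_pos.mpr ⟨(x, v), Finset.mem_filter.mpr ⟨h, rfl⟩⟩
  rw [hE v] at h1
  obtain ⟨a, ha⟩ := Finset.card_pos.mp h1
  have ha' := Finset.mem_filter.mp ha
  refine ⟨a.2, ?_⟩
  have heq : (v, a.2) = a := Prod.ext ha'.2.symm rfl
  rw [heq]; exact ha'.1

set_option maxHeartbeats 2000000 in
lemma case22 : ∃ A, IsOrientation (sSum (pathGraph 2) (pathGraph 2)) A ∧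
    IsATOrientation A ∧ ∀ v, arcOutDeg A v < 2 := by
  obtain ⟨i0, hi0⟩ : ∃ i : Fin 2, (i : ℕ) = 0 := ⟨⟨0, by omega⟩, rfl⟩
  obtain ⟨i1, hi1⟩ : ∃ i : Fin 2, (i : ℕ) = 1 := ⟨⟨1, by omega⟩, rfl⟩
  obtain ⟨r0, hr0⟩ : ∃ r : Fin 2, (r : ℕ) = 0 := ⟨⟨0, by omega⟩, rfl⟩
  obtain ⟨r1, hr1⟩ : ∃ r : Fin 2, (r : ℕ) = 1 := ⟨⟨1, by omega⟩, rfl⟩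
  have hadj01 : (pathGraph 2).Adj i0 i1 := pathGraph_adj.mpr (Or.inl (by omega))
  have hradj : (pathGraph 2).Adj r0 r1 := pathGraph_adj.mpr (Or.inl (by omega))
  obtain ⟨E0, hE0⟩ : ∃ E : ↥(pathGraph 2).edgeSet, E.val = s(i0, i1) :=
    ⟨⟨s(i0, i1), (SimpleGraph.mem_edgeSet _).mpr hadj01⟩, rfl⟩
  set c0 : Fin 2 ⊕ ↥(pathGraph 2).edgeSet := Sum.inl i0 with hc0
  set c1 : Fin 2 ⊕ ↥(pathGraph 2).edgeSet := Sum.inr E0 with hc1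
  set c2 : Fin 2 ⊕ ↥(pathGraph 2).edgeSet := Sum.inl i1 with hc2
  have hx0 : xc c0 = 0 := by simp [hc0, xc, hi0]
  have hx2 : xc c2 = 2 := by simp [hc2, xc, hi1]
  have hx1 : xc c1 = 1 := by
    rw [hc1, xc_inr E0 (i := i0) (j := i1) (by omega) hE0]; omega
  have hm0 : i0 ∈ E0.val := by rw [hE0]; exact Sym2.mem_mk_left i0 i1
  have hm1 : i1 ∈ E0.val := by rw [hE0]; exact Sym2.mem_mk_right i0 i1
  have a01 : (subdivisionGraph (pathGraph 2)).Adj c0 c1 := subdiv_adj_of_mem hm0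
  have a12 : (subdivisionGraph (pathGraph 2)).Adj c1 c2 := (subdiv_adj_of_mem hm1).symm
  -- the six vertices of the 6-cycle
  set A : Finset (((Fin 2 ⊕ ↥(pathGraph 2).edgeSet) × Fin 2) ×
      ((Fin 2 ⊕ ↥(pathGraph 2).edgeSet) × Fin 2)) :=
    {((c0, r0), (c1, r0)), ((c1, r0), (c2, r0)), ((c2, r0), (c2, r1)),
     ((c2, r1), (c1, r1)), ((c1, r1), (c0, r1)), ((c0, r1), (c0, r0))} with hAdef
  -- vertex cover
  have hfE : ∀ f : ↥(pathGraph 2).edgeSet, f = E0 := by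
    intro f
    obtain ⟨i, j, hij, hrep⟩ := path_edge_rep f.val f.2
    have hi : i = i0 := Fin.val_injective (by omega)
    have hj : j = i1 := Fin.val_injective (by omega)
    apply Subtype.ext
    rw [hrep, hE0, hi, hj]
  have hcov : ∀ w : (Fin 2 ⊕ ↥(pathGraph 2).edgeSet) × Fin 2,
      w = (c0, r0) ∨ w = (c1, r0) ∨ w = (c2, r0) ∨
      w = (c2, r1) ∨ w = (c1, r1) ∨ w = (c0, r1) := by
    rintro ⟨a | f, r⟩
    · have hrlt := r.isLt
      have hr : r = r0 ∨ r = r1 := by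
        rcases (by omega : (r : ℕ) = 0 ∨ (r : ℕ) = 1) with h | h
        · exact Or.inl (Fin.val_injective (by omega))
        · exact Or.inr (Fin.val_injective (by omega))
      have halt := a.isLt
      have ha : a = i0 ∨ a = i1 := by
        rcases (by omega : (a : ℕ) = 0 ∨ (a : ℕ) = 1) with h | h
        · exact Or.inl (Fin.val_injective (by omega))
        · exact Or.inr (Fin.val_injective (by omega))
      rcases ha with rfl | rfl <;> rcases hr with rfl | rfl
      · exact Or.inl rfl
      · exact Or.inr (Or.inr (Or.inr (Or.inr (Or.inr rfl))))
      · exact Or.inr (Or.inr (Or.inl rfl))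
      · exact Or.inr (Or.inr (Or.inr (Or.inl rfl)))
    · have hrlt := r.isLt
      have hr : r = r0 ∨ r = r1 := by
        rcases (by omega : (r : ℕ) = 0 ∨ (r : ℕ) = 1) with h | h
        · exact Or.inl (Fin.val_injective (by omega))
        · exact Or.inr (Fin.val_injective (by omega))
      rw [hfE f]
      rcases hr with rfl | rfl
      · exact Or.inr (Or.inl rfl)
      · exact Or.inr (Or.inr (Or.inr (Or.inr (Or.inl rfl))))
  have harcs : ∀ p ∈ A,
      p = ((c0, r0), (c1, r0)) ∨ p = ((c1, r0), (c2, r0)) ∨ p = ((c2, r0), (c2, r1)) ∨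
      p = ((c2, r1), (c1, r1)) ∨ p = ((c1, r1), (c0, r1)) ∨ p = ((c0, r1), (c0, r0)) := by
    intro p hp
    rw [hAdef] at hp
    simpa only [Finset.mem_insert, Finset.mem_singleton] using hp
  -- adjacency of the six arcs
  have ad0 : (sSum (pathGraph 2) (pathGraph 2)).Adj (c0, r0) (c1, r0) := sSum_adj_of_horiz a01
  have ad1 : (sSum (pathGraph 2) (pathGraph 2)).Adj (c1, r0) (c2, r0) := sSum_adj_of_horiz a12
  have ad2 : (sSum (pathGraph 2) (pathGraph 2)).Adj (c2, r0) (c2, r1) :=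
    sSum_adj_of_vert ⟨i1, hc2⟩ hradj
  have ad3 : (sSum (pathGraph 2) (pathGraph 2)).Adj (c2, r1) (c1, r1) := sSum_adj_of_horiz a12.symm
  have ad4 : (sSum (pathGraph 2) (pathGraph 2)).Adj (c1, r1) (c0, r1) := sSum_adj_of_horiz a01.symm
  have ad5 : (sSum (pathGraph 2) (pathGraph 2)).Adj (c0, r1) (c0, r0) :=
    sSum_adj_of_vert ⟨i0, hc0⟩ hradj.symm
  -- vertex distinctness tool
  have vne : ∀ (x y : Fin 2 ⊕ ↥(pathGraph 2).edgeSet) (r q : Fin 2),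
      (xc x ≠ xc y ∨ (r : ℕ) ≠ (q : ℕ)) → ((x, r) ≠ (y, q)) := by
    rintro x y r q h hc
    have h1 : x = y := congrArg Prod.fst hc
    have h2 : r = q := congrArg Prod.snd hc
    rcases h with h | h
    · exact h (congrArg xc h1)
    · exact h (congrArg Fin.val h2)
  have ne01 : ((c0, r0) : (Fin 2 ⊕ ↥(pathGraph 2).edgeSet) × Fin 2) ≠ (c1, r0) := vne _ _ _ _ (Or.inl (by omega))
  have ne02 : ((c0, r0) : (Fin 2 ⊕ ↥(pathGraph 2).edgeSet) × Fin 2) ≠ (c2, r0) := vne _ _ _ _ (Or.inl (by omega))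
  have ne03 : ((c0, r0) : (Fin 2 ⊕ ↥(pathGraph 2).edgeSet) × Fin 2) ≠ (c2, r1) := vne _ _ _ _ (Or.inl (by omega))
  have ne04 : ((c0, r0) : (Fin 2 ⊕ ↥(pathGraph 2).edgeSet) × Fin 2) ≠ (c1, r1) := vne _ _ _ _ (Or.inl (by omega))
  have ne05 : ((c0, r0) : (Fin 2 ⊕ ↥(pathGraph 2).edgeSet) × Fin 2) ≠ (c0, r1) := vne _ _ _ _ (Or.inr (by omega))
  have ne10 : ((c1, r0) : (Fin 2 ⊕ ↥(pathGraph 2).edgeSet) × Fin 2) ≠ (c0, r0) := vne _ _ _ _ (Or.inl (by omega))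
  have ne12 : ((c1, r0) : (Fin 2 ⊕ ↥(pathGraph 2).edgeSet) × Fin 2) ≠ (c2, r0) := vne _ _ _ _ (Or.inl (by omega))
  have ne13 : ((c1, r0) : (Fin 2 ⊕ ↥(pathGraph 2).edgeSet) × Fin 2) ≠ (c2, r1) := vne _ _ _ _ (Or.inl (by omega))
  have ne14 : ((c1, r0) : (Fin 2 ⊕ ↥(pathGraph 2).edgeSet) × Fin 2) ≠ (c1, r1) := vne _ _ _ _ (Or.inr (by omega))
  have ne15 : ((c1, r0) : (Fin 2 ⊕ ↥(pathGraph 2).edgeSet) × Fin 2) ≠ (c0, r1) := vne _ _ _ _ (Or.inl (by omega))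
  have ne20 : ((c2, r0) : (Fin 2 ⊕ ↥(pathGraph 2).edgeSet) × Fin 2) ≠ (c0, r0) := vne _ _ _ _ (Or.inl (by omega))
  have ne21 : ((c2, r0) : (Fin 2 ⊕ ↥(pathGraph 2).edgeSet) × Fin 2) ≠ (c1, r0) := vne _ _ _ _ (Or.inl (by omega))
  have ne23 : ((c2, r0) : (Fin 2 ⊕ ↥(pathGraph 2).edgeSet) × Fin 2) ≠ (c2, r1) := vne _ _ _ _ (Or.inr (by omega))
  have ne24 : ((c2, r0) : (Fin 2 ⊕ ↥(pathGraph 2).edgeSet) × Fin 2) ≠ (c1, r1) := vne _ _ _ _ (Or.inl (by omega))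
  have ne25 : ((c2, r0) : (Fin 2 ⊕ ↥(pathGraph 2).edgeSet) × Fin 2) ≠ (c0, r1) := vne _ _ _ _ (Or.inl (by omega))
  have ne30 : ((c2, r1) : (Fin 2 ⊕ ↥(pathGraph 2).edgeSet) × Fin 2) ≠ (c0, r0) := vne _ _ _ _ (Or.inl (by omega))
  have ne31 : ((c2, r1) : (Fin 2 ⊕ ↥(pathGraph 2).edgeSet) × Fin 2) ≠ (c1, r0) := vne _ _ _ _ (Or.inl (by omega))
  have ne32 : ((c2, r1) : (Fin 2 ⊕ ↥(pathGraph 2).edgeSet) × Fin 2) ≠ (c2, r0) := vne _ _ _ _ (Or.inr (by omega))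
  have ne34 : ((c2, r1) : (Fin 2 ⊕ ↥(pathGraph 2).edgeSet) × Fin 2) ≠ (c1, r1) := vne _ _ _ _ (Or.inl (by omega))
  have ne35 : ((c2, r1) : (Fin 2 ⊕ ↥(pathGraph 2).edgeSet) × Fin 2) ≠ (c0, r1) := vne _ _ _ _ (Or.inl (by omega))
  have ne40 : ((c1, r1) : (Fin 2 ⊕ ↥(pathGraph 2).edgeSet) × Fin 2) ≠ (c0, r0) := vne _ _ _ _ (Or.inl (by omega))
  have ne41 : ((c1, r1) : (Fin 2 ⊕ ↥(pathGraph 2).edgeSet) × Fin 2) ≠ (c1, r0) := vne _ _ _ _ (Or.inr (by omega))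
  have ne42 : ((c1, r1) : (Fin 2 ⊕ ↥(pathGraph 2).edgeSet) × Fin 2) ≠ (c2, r0) := vne _ _ _ _ (Or.inl (by omega))
  have ne43 : ((c1, r1) : (Fin 2 ⊕ ↥(pathGraph 2).edgeSet) × Fin 2) ≠ (c2, r1) := vne _ _ _ _ (Or.inl (by omega))
  have ne45 : ((c1, r1) : (Fin 2 ⊕ ↥(pathGraph 2).edgeSet) × Fin 2) ≠ (c0, r1) := vne _ _ _ _ (Or.inl (by omega))
  have ne50 : ((c0, r1) : (Fin 2 ⊕ ↥(pathGraph 2).edgeSet) × Fin 2) ≠ (c0, r0) := vne _ _ _ _ (Or.inr (by omega))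
  have ne51 : ((c0, r1) : (Fin 2 ⊕ ↥(pathGraph 2).edgeSet) × Fin 2) ≠ (c1, r0) := vne _ _ _ _ (Or.inl (by omega))
  have ne52 : ((c0, r1) : (Fin 2 ⊕ ↥(pathGraph 2).edgeSet) × Fin 2) ≠ (c2, r0) := vne _ _ _ _ (Or.inl (by omega))
  have ne53 : ((c0, r1) : (Fin 2 ⊕ ↥(pathGraph 2).edgeSet) × Fin 2) ≠ (c2, r1) := vne _ _ _ _ (Or.inl (by omega))
  have ne54 : ((c0, r1) : (Fin 2 ⊕ ↥(pathGraph 2).edgeSet) × Fin 2) ≠ (c1, r1) := vne _ _ _ _ (Or.inl (by omega))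
  have hA1 : ∀ p ∈ A, (sSum (pathGraph 2) (pathGraph 2)).Adj p.1 p.2 := by
    intro p hp
    rcases harcs p hp with rfl | rfl | rfl | rfl | rfl | rfl
    exacts [ad0, ad1, ad2, ad3, ad4, ad5]
  have hout : ∀ w, arcOutDeg A w = 1 := by
    intro w
    rcases hcov w with rfl | rfl | rfl | rfl | rfl | rfl <;>
      simp [arcOutDeg, hAdef, Finset.filter_insert, Finset.filter_singleton, Prod.mk.injEq, ne01, ne02, ne03, ne04, ne05, ne10, ne12, ne13, ne14, ne15, ne20, ne21, ne23, ne24, ne25, ne30, ne31, ne32, ne34, ne35, ne40, ne41, ne42, ne43, ne45, ne50, ne51, ne52, ne53, ne54]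
  have hin : ∀ w, arcInDeg A w = 1 := by
    intro w
    rcases hcov w with rfl | rfl | rfl | rfl | rfl | rfl <;>
      simp [arcInDeg, hAdef, Finset.filter_insert, Finset.filter_singleton, Prod.mk.injEq, ne01, ne02, ne03, ne04, ne05, ne10, ne12, ne13, ne14, ne15, ne20, ne21, ne23, ne24, ne25, ne30, ne31, ne32, ne34, ne35, ne40, ne41, ne42, ne43, ne45, ne50, ne51, ne52, ne53, ne54]
  have hEulA : IsEulerianSub A := fun v => (hin v).trans (hout v).symm
  have hcard : A.card = 6 := by
    rw [hAdef]
    repeat rw [Finset.card_insert_of_notMem (by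
      simp [Prod.mk.injEq, ne01, ne02, ne03, ne04, ne05, ne10, ne12, ne13, ne14, ne15, ne20, ne21, ne23, ne24, ne25, ne30, ne31, ne32, ne34, ne35, ne40, ne41, ne42, ne43, ne45, ne50, ne51, ne52, ne53, ne54])]
    simp
  have m0 : ((c0, r0), (c1, r0)) ∈ A := by rw [hAdef]; simp
  have m1 : ((c1, r0), (c2, r0)) ∈ A := by rw [hAdef]; simp
  have m2 : ((c2, r0), (c2, r1)) ∈ A := by rw [hAdef]; simp
  have m3 : ((c2, r1), (c1, r1)) ∈ A := by rw [hAdef]; simp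
  have m4 : ((c1, r1), (c0, r1)) ∈ A := by rw [hAdef]; simp
  have m5 : ((c0, r1), (c0, r0)) ∈ A := by rw [hAdef]; simp
  have hnotboth : ∀ u v, (u, v) ∈ A → (v, u) ∈ A → False := by
    intro u v h1 h2
    rcases harcs _ h1 with h | h | h | h | h | h <;>
      (injection h with ha hb; subst ha; subst hb) <;>
      rcases harcs _ h2 with h' | h' | h' | h' | h' | h' <;>
        (injection h' with h3 h4
         injection h3 with h5 h6
         injection h4 with h7 h8
         have e1 := congrArg xc h5
         have e2 := congrArg Fin.val h6
         have e3 := congrArg xc h7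
         have e4 := congrArg Fin.val h8
         omega)
  have hOr : IsOrientation (sSum (pathGraph 2) (pathGraph 2)) A := by
    refine ⟨hA1, ?_⟩
    intro u v huv
    constructor
    · intro h hc
      exact hnotboth u v h hc
    · intro hc
      rcases hcov u with rfl | rfl | rfl | rfl | rfl | rfl <;>
        rcases hcov v with rfl | rfl | rfl | rfl | rfl | rfl <;>
        first
          | exact absurd rfl huv.ne
          | exact m0 | exact m1 | exact m2 | exact m3 | exact m4 | exact m5
          | exact absurd m0 hc | exact absurd m1 hc | exact absurd m2 hc
          | exact absurd m3 hc | exact absurd m4 hc | exact absurd m5 hc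
          | (exfalso
             rcases sSum_adj_cases huv with ⟨h1, ⟨u', hu'⟩, -⟩ | ⟨h1, h2⟩ <;>
               first
                 | (rw [hc1] at hu'; simp at hu')
                 | (have h4 := congrArg xc h1
                    simp only [] at h4
                    omega)
                 | (have h4 := congrArg Fin.val h1
                    have h5 := subdiv_xc_step h2
                    simp only [] at h4 h5
                    omega))
  have hnext : ∀ p ∈ A, ∀ q ∈ A, p.1 = q.1 → p = q := by
    intro p hp q hq h
    rcases harcs p hp with rfl | rfl | rfl | rfl | rfl | rfl <;>
      rcases harcs q hq with rfl | rfl | rfl | rfl | rfl | rfl <;>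
      first
        | rfl
        | (exfalso
           injection h with h1 h2
           have e1 := congrArg xc h1
           have e2 := congrArg Fin.val h2
           omega)
  have hBstep : ∀ B : Finset (((Fin 2 ⊕ ↥(pathGraph 2).edgeSet) × Fin 2) ×
      ((Fin 2 ⊕ ↥(pathGraph 2).edgeSet) × Fin 2)), B ⊆ A → IsEulerianSub B →
      ∀ a ∈ B, ∀ q ∈ A, q.1 = a.2 → q ∈ B := by
    intro B hsub hE a ha q hq hq1
    obtain ⟨w, hw⟩ := euler_chase B hE (x := a.1) (v := a.2) (by rw [Prod.mk.eta]; exact ha)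
    have hwA := hsub hw
    have heq := hnext q hq (a.2, w) hwA hq1
    rw [heq]; exact hw
  have hfull : ∀ B : Finset (((Fin 2 ⊕ ↥(pathGraph 2).edgeSet) × Fin 2) ×
      ((Fin 2 ⊕ ↥(pathGraph 2).edgeSet) × Fin 2)), B ⊆ A → IsEulerianSub B → B ≠ ∅ → B = A := by
    intro B hsub hE hne
    obtain ⟨p, hp⟩ := Finset.nonempty_iff_ne_empty.mpr hne
    have hp' := hsub hp
    have hall : ((c0, r0), (c1, r0)) ∈ B ∧ ((c1, r0), (c2, r0)) ∈ B ∧ ((c2, r0), (c2, r1)) ∈ B ∧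
        ((c2, r1), (c1, r1)) ∈ B ∧ ((c1, r1), (c0, r1)) ∈ B ∧ ((c0, r1), (c0, r0)) ∈ B := by
      rcases harcs p hp' with rfl | rfl | rfl | rfl | rfl | rfl
      · -- start at arc 0
        have b1 : ((c1, r0), (c2, r0)) ∈ B := hBstep B hsub hE _ hp _ m1 rfl
        have b2 : ((c2, r0), (c2, r1)) ∈ B := hBstep B hsub hE _ b1 _ m2 rfl
        have b3 : ((c2, r1), (c1, r1)) ∈ B := hBstep B hsub hE _ b2 _ m3 rfl
        have b4 : ((c1, r1), (c0, r1)) ∈ B := hBstep B hsub hE _ b3 _ m4 rfl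
        have b5 : ((c0, r1), (c0, r0)) ∈ B := hBstep B hsub hE _ b4 _ m5 rfl
        exact ⟨hp, b1, b2, b3, b4, b5⟩
      · -- start at arc 1
        have b2 : ((c2, r0), (c2, r1)) ∈ B := hBstep B hsub hE _ hp _ m2 rfl
        have b3 : ((c2, r1), (c1, r1)) ∈ B := hBstep B hsub hE _ b2 _ m3 rfl
        have b4 : ((c1, r1), (c0, r1)) ∈ B := hBstep B hsub hE _ b3 _ m4 rfl
        have b5 : ((c0, r1), (c0, r0)) ∈ B := hBstep B hsub hE _ b4 _ m5 rfl
        have b0 : ((c0, r0), (c1, r0)) ∈ B := hBstep B hsub hE _ b5 _ m0 rfl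
        exact ⟨b0, hp, b2, b3, b4, b5⟩
      · -- start at arc 2
        have b3 : ((c2, r1), (c1, r1)) ∈ B := hBstep B hsub hE _ hp _ m3 rfl
        have b4 : ((c1, r1), (c0, r1)) ∈ B := hBstep B hsub hE _ b3 _ m4 rfl
        have b5 : ((c0, r1), (c0, r0)) ∈ B := hBstep B hsub hE _ b4 _ m5 rfl
        have b0 : ((c0, r0), (c1, r0)) ∈ B := hBstep B hsub hE _ b5 _ m0 rfl
        have b1 : ((c1, r0), (c2, r0)) ∈ B := hBstep B hsub hE _ b0 _ m1 rfl
        exact ⟨b0, b1, hp, b3, b4, b5⟩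
      · -- start at arc 3
        have b4 : ((c1, r1), (c0, r1)) ∈ B := hBstep B hsub hE _ hp _ m4 rfl
        have b5 : ((c0, r1), (c0, r0)) ∈ B := hBstep B hsub hE _ b4 _ m5 rfl
        have b0 : ((c0, r0), (c1, r0)) ∈ B := hBstep B hsub hE _ b5 _ m0 rfl
        have b1 : ((c1, r0), (c2, r0)) ∈ B := hBstep B hsub hE _ b0 _ m1 rfl
        have b2 : ((c2, r0), (c2, r1)) ∈ B := hBstep B hsub hE _ b1 _ m2 rfl
        exact ⟨b0, b1, b2, hp, b4, b5⟩
      · -- start at arc 4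
        have b5 : ((c0, r1), (c0, r0)) ∈ B := hBstep B hsub hE _ hp _ m5 rfl
        have b0 : ((c0, r0), (c1, r0)) ∈ B := hBstep B hsub hE _ b5 _ m0 rfl
        have b1 : ((c1, r0), (c2, r0)) ∈ B := hBstep B hsub hE _ b0 _ m1 rfl
        have b2 : ((c2, r0), (c2, r1)) ∈ B := hBstep B hsub hE _ b1 _ m2 rfl
        have b3 : ((c2, r1), (c1, r1)) ∈ B := hBstep B hsub hE _ b2 _ m3 rfl
        exact ⟨b0, b1, b2, b3, hp, b5⟩
      · -- start at arc 5
        have b0 : ((c0, r0), (c1, r0)) ∈ B := hBstep B hsub hE _ hp _ m0 rfl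
        have b1 : ((c1, r0), (c2, r0)) ∈ B := hBstep B hsub hE _ b0 _ m1 rfl
        have b2 : ((c2, r0), (c2, r1)) ∈ B := hBstep B hsub hE _ b1 _ m2 rfl
        have b3 : ((c2, r1), (c1, r1)) ∈ B := hBstep B hsub hE _ b2 _ m3 rfl
        have b4 : ((c1, r1), (c0, r1)) ∈ B := hBstep B hsub hE _ b3 _ m4 rfl
        exact ⟨b0, b1, b2, b3, b4, hp⟩
    refine Finset.Subset.antisymm hsub ?_
    intro q hq
    rcases harcs q hq with rfl | rfl | rfl | rfl | rfl | rfl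
    exacts [hall.1, hall.2.1, hall.2.2.1, hall.2.2.2.1, hall.2.2.2.2.1, hall.2.2.2.2.2]
  have hAT : IsATOrientation A := by
    refine isAT_of_empty_or_all A (by rw [hcard]; decide) ?_ ?_ hEulA
    · intro h
      have := m0
      rw [h] at this
      exact absurd this (Finset.notMem_empty _)
    · intro B hB hE
      by_cases hBe : B = ∅
      · exact Or.inl hBe
      · exact Or.inr (hfull B (Finset.mem_powerset.mp hB) hE hBe)
  exact ⟨A, hOr, hAT, fun v => by rw [hout v]; omega⟩

end Case22
/-- `AT(P_n +_S P_m) = 2` if `n = 2` and `m = 2`, and `= 3` otherwise. -/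
theorem stmt5 (n m : ℕ) (hn : 2 ≤ n) (hm : 2 ≤ m) :
    alonTarsiNumber (sSum (SimpleGraph.pathGraph n) (SimpleGraph.pathGraph m)) =
      if n = 2 ∧ m = 2 then 2 else 3 := by
  classical
  open SimpleGraph in
  have hedge : ∀ (n' m' : ℕ), 2 ≤ n' → 2 ≤ m' →
      ∃ u v, (sSum (pathGraph n') (pathGraph m')).Adj u v := by
    intro n' m' hn' hm'
    obtain ⟨i0, hi0⟩ : ∃ i : Fin n', (i : ℕ) = 0 := ⟨⟨0, by omega⟩, rfl⟩
    obtain ⟨r0, hr0⟩ : ∃ r : Fin m', (r : ℕ) = 0 := ⟨⟨0, by omega⟩, rfl⟩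
    obtain ⟨r1, hr1⟩ : ∃ r : Fin m', (r : ℕ) = 1 := ⟨⟨1, by omega⟩, rfl⟩
    exact ⟨(Sum.inl i0, r0), (Sum.inl i0, r1),
      sSum_adj_of_vert ⟨i0, rfl⟩ (SimpleGraph.pathGraph_adj.mpr (Or.inl (by omega)))⟩
  by_cases h22 : n = 2 ∧ m = 2
  · obtain ⟨rfl, rfl⟩ := h22
    rw [if_pos ⟨rfl, rfl⟩]
    obtain ⟨A, hA1, hA2, hA3⟩ := case22
    have h2mem : 2 ∈ {k : ℕ | ∃ A, IsOrientation
        (sSum (SimpleGraph.pathGraph 2) (SimpleGraph.pathGraph 2)) A ∧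
        IsATOrientation A ∧ ∀ v, arcOutDeg A v < k} := ⟨A, hA1, hA2, hA3⟩
    refine le_antisymm (Nat.sInf_le h2mem) (le_csInf ⟨2, h2mem⟩ ?_)
    rintro k ⟨A', h1, h2, h3⟩
    by_contra hk
    push_neg at hk
    have hz : ∀ v, arcOutDeg A' v = 0 := fun v => by have := h3 v; omega
    obtain ⟨u, v, huv⟩ := hedge 2 2 (by omega) (by omega)
    exact absurd (no_orientation_outdeg_zero _ A' h1 hz huv) not_false
  · rw [if_neg h22]
    obtain ⟨A, hA1, hA2, hA3⟩ := exists_AT3 n m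
    have h3mem : 3 ∈ {k : ℕ | ∃ A, IsOrientation
        (sSum (SimpleGraph.pathGraph n) (SimpleGraph.pathGraph m)) A ∧
        IsATOrientation A ∧ ∀ v, arcOutDeg A v < k} := ⟨A, hA1, hA2, hA3⟩
    refine le_antisymm (Nat.sInf_le h3mem) (le_csInf ⟨3, h3mem⟩ ?_)
    rintro k ⟨A', h1, h2, h3⟩
    by_contra hk
    push_neg at hk
    interval_cases k
    · obtain ⟨i0, hi0⟩ : ∃ i : Fin n, (i : ℕ) = 0 := ⟨⟨0, by omega⟩, rfl⟩
      obtain ⟨r0, hr0⟩ : ∃ r : Fin m, (r : ℕ) = 0 := ⟨⟨0, by omega⟩, rfl⟩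
      exact absurd (h3 (Sum.inl i0, r0)) (by omega)
    · have hz : ∀ v, arcOutDeg A' v = 0 := fun v => by have := h3 v; omega
      obtain ⟨u, v, huv⟩ := hedge n m hn hm
      exact no_orientation_outdeg_zero _ A' h1 hz huv
    · have hd : ∀ v, arcOutDeg A' v ≤ 1 := fun v => by have := h3 v; omega
      have hcase : 3 ≤ n ∨ 3 ≤ m := by omega
      rcases hcase with h | h
      · exact lower_n3 h hm A' h1 hd
      · exact lower_m3 hn h A' h1 hd
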